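/- Let x* ∈ ℝ^n be the unique minimizer of f, i.e., f(x*) < f(y) for all y ≠ x*. Let (μ_k) be positive reals with μ_k → 0, let C ∈ ℝ, and let (x_k) be a sequence in ℝ^n with f(x_k) ≤ C for all k and ‖∇f(x_k; μ_k)‖ → 0, where ∇f(x;μ) = Σ_{i=1}^m λ_i(x;μ)(x − c_i)/g_i(x;μ). Then x_k → x*. -/

import Mathlib

open Real Filter

noncomputable section

variable {n m : ℕ}

/-- `g_i(x;μ) = √(‖x − c_i‖² + μ²)`. -/
def sebG (c : Fin m → EuclideanSpace ℝ (Fin n)) (μ : ℝ) (x : EuclideanSpace ℝ (Fin n))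
    (i : Fin m) : ℝ :=
  Real.sqrt (‖x - c i‖ ^ 2 + μ ^ 2)

/-- `f_i(x;μ) = g_i(x;μ) + r_i`. -/
def sebFi (c : Fin m → EuclideanSpace ℝ (Fin n)) (r : Fin m → ℝ) (μ : ℝ)
    (x : EuclideanSpace ℝ (Fin n)) (i : Fin m) : ℝ :=
  sebG c μ x i + r i

/-- the log-exponential aggregation function `f(x;μ) = μ ln(Σ_i exp(f_i(x;μ)/μ))`. -/
def sebFmu (c : Fin m → EuclideanSpace ℝ (Fin n)) (r : Fin m → ℝ) (μ : ℝ)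
    (x : EuclideanSpace ℝ (Fin n)) : ℝ :=
  μ * Real.log (∑ i : Fin m, Real.exp (sebFi c r μ x i / μ))

/-- `f(x) = max_i (‖x − c_i‖ + r_i)`. -/
def sebF (c : Fin m → EuclideanSpace ℝ (Fin n)) (r : Fin m → ℝ)
    (x : EuclideanSpace ℝ (Fin n)) : ℝ :=
  ⨆ i : Fin m, (‖x - c i‖ + r i)

/-- `f_∞(x;μ) = max_i f_i(x;μ)`. -/
def sebFinf (c : Fin m → EuclideanSpace ℝ (Fin n)) (r : Fin m → ℝ) (μ : ℝ)
    (x : EuclideanSpace ℝ (Fin n)) : ℝ :=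
  ⨆ i : Fin m, sebFi c r μ x i

/-- `λ_i(x;μ)`. -/
def sebLam (c : Fin m → EuclideanSpace ℝ (Fin n)) (r : Fin m → ℝ) (μ : ℝ)
    (x : EuclideanSpace ℝ (Fin n)) (i : Fin m) : ℝ :=
  Real.exp (sebFi c r μ x i / μ) / ∑ j : Fin m, Real.exp (sebFi c r μ x j / μ)

/-- `∇f_i(x;μ) = (x − c_i)/g_i(x;μ)`. -/
def sebGradI (c : Fin m → EuclideanSpace ℝ (Fin n)) (μ : ℝ)
    (x : EuclideanSpace ℝ (Fin n)) (i : Fin m) : EuclideanSpace ℝ (Fin n) :=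
  (sebG c μ x i)⁻¹ • (x - c i)

/-- `∇f(x;μ) = Σ_i λ_i(x;μ) ∇f_i(x;μ)`. -/
def sebGrad (c : Fin m → EuclideanSpace ℝ (Fin n)) (r : Fin m → ℝ) (μ : ℝ)
    (x : EuclideanSpace ℝ (Fin n)) : EuclideanSpace ℝ (Fin n) :=
  ∑ i : Fin m, sebLam c r μ x i • sebGradI c μ x i

/-- `S(x;μ,ε) = {i : λ_i(x;μ) ≥ ε}`. -/
def sebS (c : Fin m → EuclideanSpace ℝ (Fin n)) (r : Fin m → ℝ) (μ ε : ℝ)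
    (x : EuclideanSpace ℝ (Fin n)) : Finset (Fin m) :=
  Finset.univ.filter (fun i => ε ≤ sebLam c r μ x i)

/-- `λ̃_i(x;μ)`. -/
def sebLamT (c : Fin m → EuclideanSpace ℝ (Fin n)) (r : Fin m → ℝ) (μ ε : ℝ)
    (x : EuclideanSpace ℝ (Fin n)) (i : Fin m) : ℝ :=
  Real.exp (sebFi c r μ x i / μ) / ∑ j ∈ sebS c r μ ε x, Real.exp (sebFi c r μ x j / μ)

/-- the truncated log-exponential function `f̃(x;μ)`. -/
def sebFmuT (c : Fin m → EuclideanSpace ℝ (Fin n)) (r : Fin m → ℝ) (μ ε : ℝ)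
    (x : EuclideanSpace ℝ (Fin n)) : ℝ :=
  μ * Real.log (∑ i ∈ sebS c r μ ε x, Real.exp (sebFi c r μ x i / μ))

/-- `∇f̃(x;μ) = Σ_{i∈S} λ̃_i(x;μ) ∇f_i(x;μ)`. -/
def sebGradT (c : Fin m → EuclideanSpace ℝ (Fin n)) (r : Fin m → ℝ) (μ ε : ℝ)
    (x : EuclideanSpace ℝ (Fin n)) : EuclideanSpace ℝ (Fin n) :=
  ∑ i ∈ sebS c r μ ε x, sebLamT c r μ ε x i • sebGradI c μ x i

/-- `∇²f_i(x;μ) = (1/g_i) I_n − (x−c_i)(x−c_i)ᵀ/g_i³` as an `n×n` matrix. -/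
def sebHessI (c : Fin m → EuclideanSpace ℝ (Fin n)) (μ : ℝ)
    (x : EuclideanSpace ℝ (Fin n)) (i : Fin m) : Matrix (Fin n) (Fin n) ℝ :=
  (sebG c μ x i)⁻¹ • (1 : Matrix (Fin n) (Fin n) ℝ)
    - ((sebG c μ x i) ^ 3)⁻¹ •
        Matrix.vecMulVec (fun j => (x - c i) j) (fun j => (x - c i) j)

/-- `∇²f(x;μ)` as an `n×n` matrix. -/
def sebHess (c : Fin m → EuclideanSpace ℝ (Fin n)) (r : Fin m → ℝ) (μ : ℝ)
    (x : EuclideanSpace ℝ (Fin n)) : Matrix (Fin n) (Fin n) ℝ :=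
  (∑ i : Fin m, (sebLam c r μ x i • sebHessI c μ x i
      + (μ⁻¹ * sebLam c r μ x i) •
          Matrix.vecMulVec (fun j => sebGradI c μ x i j) (fun j => sebGradI c μ x i j)))
    - μ⁻¹ • Matrix.vecMulVec (fun j => sebGrad c r μ x j) (fun j => sebGrad c r μ x j)

/-- `∇²f̃(x;μ)` as an `n×n` matrix. -/
def sebHessT (c : Fin m → EuclideanSpace ℝ (Fin n)) (r : Fin m → ℝ) (μ ε : ℝ)
    (x : EuclideanSpace ℝ (Fin n)) : Matrix (Fin n) (Fin n) ℝ :=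
  (∑ i ∈ sebS c r μ ε x, (sebLamT c r μ ε x i • sebHessI c μ x i
      + (μ⁻¹ * sebLamT c r μ ε x i) •
          Matrix.vecMulVec (fun j => sebGradI c μ x i j) (fun j => sebGradI c μ x i j)))
    - μ⁻¹ • Matrix.vecMulVec (fun j => sebGradT c r μ ε x j) (fun j => sebGradT c r μ ε x j)

end

section Helpers
open RealInnerProductSpace
variable {n m : ℕ}

lemma sebG_pos (c : Fin m → EuclideanSpace ℝ (Fin n)) {μ : ℝ} (hμ : 0 < μ)
    (x : EuclideanSpace ℝ (Fin n)) (i : Fin m) : 0 < sebG c μ x i := by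
  apply Real.sqrt_pos.2; positivity

lemma norm_le_sebG (c : Fin m → EuclideanSpace ℝ (Fin n)) (μ : ℝ)
    (x : EuclideanSpace ℝ (Fin n)) (i : Fin m) : ‖x - c i‖ ≤ sebG c μ x i := by
  rw [show ‖x - c i‖ = Real.sqrt (‖x - c i‖ ^ 2) by rw [Real.sqrt_sq (norm_nonneg _)]]
  exact Real.sqrt_le_sqrt (by nlinarith [sq_nonneg μ])

lemma sebG_le (c : Fin m → EuclideanSpace ℝ (Fin n)) {μ : ℝ} (hμ : 0 < μ)
    (x : EuclideanSpace ℝ (Fin n)) (i : Fin m) : sebG c μ x i ≤ ‖x - c i‖ + μ := by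
  rw [show ‖x - c i‖ + μ = Real.sqrt ((‖x - c i‖ + μ) ^ 2) by
    rw [Real.sqrt_sq (by positivity)]]
  exact Real.sqrt_le_sqrt (by nlinarith [norm_nonneg (x - c i), hμ.le])

-- key Cauchy-Schwarz-type: g(x)² + ⟪x−c, y−x⟫ ≤ g(x) g(y)
lemma sebG_grad_ineq (c : Fin m → EuclideanSpace ℝ (Fin n)) {μ : ℝ} (hμ : 0 < μ)
    (x y : EuclideanSpace ℝ (Fin n)) (i : Fin m) :
    sebG c μ x i + (sebG c μ x i)⁻¹ * ⟪x - c i, y - x⟫ ≤ sebG c μ y i := by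
  have hg := sebG_pos c hμ x i
  have hg' := sebG_pos c hμ y i
  rw [← sub_nonneg]
  have key : sebG c μ x i ^ 2 + ⟪x - c i, y - x⟫ ≤ sebG c μ x i * sebG c μ y i := by
    have h1 : ⟪x - c i, y - x⟫ = ⟪x - c i, y - c i⟫ - ‖x - c i‖ ^ 2 := by
      rw [show (y : EuclideanSpace ℝ (Fin n)) - x = (y - c i) - (x - c i) by abel,
        inner_sub_right, real_inner_self_eq_norm_sq]
    have h2 : ⟪x - c i, y - c i⟫ ≤ ‖x - c i‖ * ‖y - c i‖ := real_inner_le_norm _ _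
    have h3 : ‖x - c i‖ * ‖y - c i‖ + μ ^ 2 ≤ sebG c μ x i * sebG c μ y i := by
      have : sebG c μ x i * sebG c μ y i
          = Real.sqrt ((‖x - c i‖ ^ 2 + μ ^ 2) * (‖y - c i‖ ^ 2 + μ ^ 2)) := by
        rw [sebG, sebG, ← Real.sqrt_mul (by positivity)]
      rw [this]
      rw [show ‖x - c i‖ * ‖y - c i‖ + μ ^ 2
          = Real.sqrt ((‖x - c i‖ * ‖y - c i‖ + μ ^ 2) ^ 2) by
        rw [Real.sqrt_sq (by positivity)]]
      apply Real.sqrt_le_sqrt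
      nlinarith [sq_nonneg (‖x - c i‖ - ‖y - c i‖), sq_nonneg μ]
    have hg2 : sebG c μ x i ^ 2 = ‖x - c i‖ ^ 2 + μ ^ 2 := by
      rw [sebG, Real.sq_sqrt (by positivity)]
    nlinarith
  have : sebG c μ y i - (sebG c μ x i + (sebG c μ x i)⁻¹ * ⟪x - c i, y - x⟫)
      = (sebG c μ x i)⁻¹ * (sebG c μ x i * sebG c μ y i
        - (sebG c μ x i ^ 2 + ⟪x - c i, y - x⟫)) := by
    field_simp
  rw [this]
  exact mul_nonneg (by positivity) (by linarith)

variable [NeZero m]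

lemma sumexp_pos (c : Fin m → EuclideanSpace ℝ (Fin n)) (r : Fin m → ℝ) (μ : ℝ)
    (x : EuclideanSpace ℝ (Fin n)) :
    0 < ∑ j : Fin m, Real.exp (sebFi c r μ x j / μ) :=
  Finset.sum_pos (fun j _ => Real.exp_pos _) Finset.univ_nonempty

lemma sebF_le_sebFmu (c : Fin m → EuclideanSpace ℝ (Fin n)) (r : Fin m → ℝ) {μ : ℝ}
    (hμ : 0 < μ) (x : EuclideanSpace ℝ (Fin n)) :
    sebF c r x ≤ sebFmu c r μ x := by
  apply ciSup_le
  intro i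
  have h1 : ‖x - c i‖ + r i ≤ sebFi c r μ x i :=
    add_le_add_left (norm_le_sebG c μ x i) _
  have h2 : sebFi c r μ x i ≤ sebFmu c r μ x := by
    rw [sebFmu, ← div_le_iff₀' hμ]
    rw [Real.le_log_iff_exp_le (sumexp_pos c r μ x)]
    exact Finset.single_le_sum (f := fun j => Real.exp (sebFi c r μ x j / μ))
      (fun j _ => (Real.exp_pos _).le) (Finset.mem_univ i)
  linarith

lemma sebFmu_le_sebF (c : Fin m → EuclideanSpace ℝ (Fin n)) (r : Fin m → ℝ) {μ : ℝ}
    (hμ : 0 < μ) (x : EuclideanSpace ℝ (Fin n)) :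
    sebFmu c r μ x ≤ sebF c r x + μ * (1 + Real.log m) := by
  have hFi : ∀ i, sebFi c r μ x i ≤ sebF c r x + μ := by
    intro i
    have h1 : sebFi c r μ x i ≤ ‖x - c i‖ + r i + μ := by
      rw [sebFi]; linarith [sebG_le c hμ x i]
    have h2 : ‖x - c i‖ + r i ≤ sebF c r x :=
      le_ciSup (f := fun i => ‖x - c i‖ + r i) (Set.Finite.bddAbove (Set.finite_range _)) i
    linarith
  have hsum : (∑ i : Fin m, Real.exp (sebFi c r μ x i / μ))
      ≤ m * Real.exp ((sebF c r x + μ) / μ) := by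
    calc (∑ i : Fin m, Real.exp (sebFi c r μ x i / μ))
        ≤ ∑ _i : Fin m, Real.exp ((sebF c r x + μ) / μ) :=
          Finset.sum_le_sum (fun i _ => Real.exp_le_exp.2 (by gcongr; exact hFi i))
      _ = m * Real.exp ((sebF c r x + μ) / μ) := by
          simp [Finset.sum_const, mul_comm]
  have hm0 : (0:ℝ) < m := by exact_mod_cast Nat.pos_of_ne_zero (NeZero.ne m)
  have hlog : Real.log (∑ i : Fin m, Real.exp (sebFi c r μ x i / μ))
      ≤ Real.log m + (sebF c r x + μ) / μ := by
    calc Real.log (∑ i : Fin m, Real.exp (sebFi c r μ x i / μ))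
        ≤ Real.log (m * Real.exp ((sebF c r x + μ) / μ)) :=
          Real.log_le_log (sumexp_pos c r μ x) hsum
      _ = Real.log m + (sebF c r x + μ) / μ := by
          rw [Real.log_mul (ne_of_gt hm0) (Real.exp_ne_zero _), Real.log_exp]
  rw [sebFmu]
  calc μ * Real.log (∑ i : Fin m, Real.exp (sebFi c r μ x i / μ))
      ≤ μ * (Real.log m + (sebF c r x + μ) / μ) := by
        exact mul_le_mul_of_nonneg_left hlog hμ.le
    _ = sebF c r x + μ * (1 + Real.log m) := by field_simp; ring

lemma sebLam_sum (c : Fin m → EuclideanSpace ℝ (Fin n)) (r : Fin m → ℝ) (μ : ℝ)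
    (x : EuclideanSpace ℝ (Fin n)) : ∑ i : Fin m, sebLam c r μ x i = 1 := by
  rw [show (∑ i : Fin m, sebLam c r μ x i)
      = (∑ i : Fin m, Real.exp (sebFi c r μ x i / μ)) / (∑ j : Fin m, Real.exp (sebFi c r μ x j / μ)) by
    rw [Finset.sum_div]; rfl]
  exact div_self (ne_of_gt (sumexp_pos c r μ x))

lemma sebFmu_convex_ineq (c : Fin m → EuclideanSpace ℝ (Fin n)) (r : Fin m → ℝ) {μ : ℝ}
    (hμ : 0 < μ) (x y : EuclideanSpace ℝ (Fin n)) :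
    sebFmu c r μ x + ⟪sebGrad c r μ x, y - x⟫ ≤ sebFmu c r μ y := by
  set S := ∑ j : Fin m, Real.exp (sebFi c r μ x j / μ) with hS
  have hSpos : 0 < S := sumexp_pos c r μ x
  set t : Fin m → ℝ := fun i => (sebG c μ x i)⁻¹ * ⟪x - c i, y - x⟫ with ht
  have hlam_nonneg : ∀ i, 0 ≤ sebLam c r μ x i := fun i =>
    div_nonneg (Real.exp_pos _).le hSpos.le
  have hgrad_inner : ⟪sebGrad c r μ x, y - x⟫ = ∑ i : Fin m, sebLam c r μ x i * t i := by
    rw [sebGrad, sum_inner]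
    congr 1; ext i
    rw [real_inner_smul_left, sebGradI, real_inner_smul_left, ht]
  -- Jensen
  have jensen : Real.exp (∑ i : Fin m, sebLam c r μ x i * (t i / μ))
      ≤ ∑ i : Fin m, sebLam c r μ x i * Real.exp (t i / μ) := by
    have := convexOn_exp.map_sum_le (t := Finset.univ) (w := sebLam c r μ x)
      (p := fun i => t i / μ) (fun i _ => hlam_nonneg i) (sebLam_sum c r μ x)
      (fun i _ => Set.mem_univ _)
    simpa using this
  -- pointwise exp bound
  have hpt : ∀ i, S * (sebLam c r μ x i * Real.exp (t i / μ))
      ≤ Real.exp (sebFi c r μ y i / μ) := by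
    intro i
    have h1 : sebFi c r μ x i + t i ≤ sebFi c r μ y i := by
      have h0 := sebG_grad_ineq c hμ x y i
      rw [sebFi, sebFi]; simp only [ht]; linarith
    have h2 : S * (sebLam c r μ x i * Real.exp (t i / μ))
        = Real.exp ((sebFi c r μ x i + t i) / μ) := by
      rw [sebLam, add_div, Real.exp_add, ← hS]
      field_simp
    rw [h2]
    exact Real.exp_le_exp.2 (div_le_div_of_nonneg_right h1 hμ.le)
  have hsum : S * Real.exp (∑ i : Fin m, sebLam c r μ x i * (t i / μ))
      ≤ ∑ i : Fin m, Real.exp (sebFi c r μ y i / μ) := by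
    calc S * Real.exp (∑ i : Fin m, sebLam c r μ x i * (t i / μ))
        ≤ S * ∑ i : Fin m, sebLam c r μ x i * Real.exp (t i / μ) := by
          exact mul_le_mul_of_nonneg_left jensen hSpos.le
      _ = ∑ i : Fin m, S * (sebLam c r μ x i * Real.exp (t i / μ)) := by
          rw [Finset.mul_sum]
      _ ≤ ∑ i : Fin m, Real.exp (sebFi c r μ y i / μ) :=
          Finset.sum_le_sum (fun i _ => hpt i)
  have hlog : Real.log S + (∑ i : Fin m, sebLam c r μ x i * (t i / μ))
      ≤ Real.log (∑ i : Fin m, Real.exp (sebFi c r μ y i / μ)) := by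
    calc Real.log S + (∑ i : Fin m, sebLam c r μ x i * (t i / μ))
        = Real.log (S * Real.exp (∑ i : Fin m, sebLam c r μ x i * (t i / μ))) := by
          rw [Real.log_mul (ne_of_gt hSpos) (Real.exp_ne_zero _), Real.log_exp]
      _ ≤ _ := Real.log_le_log (by positivity) hsum
  have hμsum : μ * (∑ i : Fin m, sebLam c r μ x i * (t i / μ))
      = ∑ i : Fin m, sebLam c r μ x i * t i := by
    rw [Finset.mul_sum]
    refine Finset.sum_congr rfl fun i _ => ?_
    field_simp
  rw [sebFmu, sebFmu, hgrad_inner, ← hμsum, ← hS]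
  calc μ * Real.log S + μ * (∑ i : Fin m, sebLam c r μ x i * (t i / μ))
      = μ * (Real.log S + (∑ i : Fin m, sebLam c r μ x i * (t i / μ))) := by ring
    _ ≤ μ * Real.log (∑ i : Fin m, Real.exp (sebFi c r μ y i / μ)) :=
        mul_le_mul_of_nonneg_left hlog hμ.le


end Helpers

open RealInnerProductSpace in
theorem stmt_17 (n m : ℕ) (hm : 1 ≤ m) (c : Fin m → EuclideanSpace ℝ (Fin n))
    (r : Fin m → ℝ) (hr : ∀ i, 0 ≤ r i)
    (xstar : EuclideanSpace ℝ (Fin n))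
    (hxstar : ∀ y, y ≠ xstar → sebF c r xstar < sebF c r y)
    (μ : ℕ → ℝ) (hμ : ∀ k, 0 < μ k) (hμ0 : Filter.Tendsto μ Filter.atTop (nhds 0))
    (C : ℝ) (x : ℕ → EuclideanSpace ℝ (Fin n)) (hC : ∀ k, sebF c r (x k) ≤ C)
    (hgrad : Filter.Tendsto (fun k => ‖sebGrad c r (μ k) (x k)‖) Filter.atTop (nhds 0)) :
    Filter.Tendsto x Filter.atTop (nhds xstar) := by
  haveI : NeZero m := ⟨Nat.one_le_iff_ne_zero.1 hm⟩
  set i0 : Fin m := ⟨0, hm⟩ with hi0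
  set B : ℝ := C + dist (c i0) xstar with hB
  -- bound on distances
  have hdist : ∀ k, dist (x k) xstar ≤ B := by
    intro k
    have h1 : ‖x k - c i0‖ + r i0 ≤ sebF c r (x k) :=
      le_ciSup (f := fun i => ‖x k - c i‖ + r i) (Set.Finite.bddAbove (Set.finite_range _)) i0
    have h2 : dist (x k) (c i0) ≤ C := by
      rw [dist_eq_norm]; linarith [hr i0, hC k]
    calc dist (x k) xstar ≤ dist (x k) (c i0) + dist (c i0) xstar := dist_triangle _ _ _
      _ ≤ B := by rw [hB]; linarith
  -- key inequality
  have hkey : ∀ k, sebF c r (x k)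
      ≤ sebF c r xstar + ‖sebGrad c r (μ k) (x k)‖ * B + μ k * (1 + Real.log m) := by
    intro k
    have h1 : sebF c r (x k) ≤ sebFmu c r (μ k) (x k) := sebF_le_sebFmu c r (hμ k) (x k)
    have h2 := sebFmu_convex_ineq c r (hμ k) (x k) xstar
    have h3 : sebFmu c r (μ k) xstar ≤ sebF c r xstar + μ k * (1 + Real.log m) :=
      sebFmu_le_sebF c r (hμ k) xstar
    have h4 : -(‖sebGrad c r (μ k) (x k)‖ * B) ≤ ⟪sebGrad c r (μ k) (x k), xstar - x k⟫ := by
      have h5 : |⟪sebGrad c r (μ k) (x k), xstar - x k⟫|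
          ≤ ‖sebGrad c r (μ k) (x k)‖ * ‖xstar - x k‖ := abs_real_inner_le_norm _ _
      have h6 : ‖xstar - x k‖ ≤ B := by
        rw [← dist_eq_norm, dist_comm]; exact hdist k
      have h7 : ‖sebGrad c r (μ k) (x k)‖ * ‖xstar - x k‖
          ≤ ‖sebGrad c r (μ k) (x k)‖ * B := by
        exact mul_le_mul_of_nonneg_left h6 (norm_nonneg _)
      have := neg_abs_le ⟪sebGrad c r (μ k) (x k), xstar - x k⟫
      linarith
    linarith
  -- sebF (x k) → sebF xstar
  have hge : ∀ k, sebF c r xstar ≤ sebF c r (x k) := by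
    intro k
    by_cases h : x k = xstar
    · rw [h]
    · exact (hxstar (x k) h).le
  have htendF : Filter.Tendsto (fun k => sebF c r (x k)) Filter.atTop (nhds (sebF c r xstar)) := by
    have hupper : Filter.Tendsto
        (fun k => sebF c r xstar + ‖sebGrad c r (μ k) (x k)‖ * B + μ k * (1 + Real.log m))
        Filter.atTop (nhds (sebF c r xstar)) := by
      have := (tendsto_const_nhds (x := sebF c r xstar) (f := Filter.atTop (α := ℕ))).add
        ((hgrad.mul_const B).add (hμ0.mul_const (1 + Real.log m)))
      simpa using this.congr (fun k => by ring)
    exact tendsto_of_tendsto_of_tendsto_of_le_of_le tendsto_const_nhds hupper hge hkey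
  -- continuity of sebF
  have hcont : Continuous (sebF c r) := by
    have heq : sebF c r = fun z => Finset.univ.sup' Finset.univ_nonempty
        (fun i => ‖z - c i‖ + r i) := by
      funext z; rw [sebF, ← Finset.sup'_univ_eq_ciSup]
    rw [heq]
    exact Continuous.finset_sup'_apply Finset.univ_nonempty
      (fun i _ => ((continuous_id.sub continuous_const).norm.add continuous_const))
  -- conclude
  rw [Metric.tendsto_atTop]
  intro ε hε
  set K := Metric.closedBall xstar B ∩ (Metric.ball xstar ε)ᶜ with hK
  have hKcomp : IsCompact K :=
    (isCompact_closedBall xstar B).inter_right Metric.isOpen_ball.isClosed_compl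
  by_cases hKne : K.Nonempty
  · obtain ⟨y0, hy0K, hy0min⟩ := hKcomp.exists_isMinOn hKne hcont.continuousOn
    have hy0ne : y0 ≠ xstar := by
      intro h
      have := hy0K.2
      rw [h] at this
      exact this (Metric.mem_ball_self hε)
    have hlt : sebF c r xstar < sebF c r y0 := hxstar y0 hy0ne
    have hev : ∀ᶠ k in Filter.atTop, sebF c r (x k) < sebF c r y0 :=
      htendF.eventually (eventually_lt_nhds hlt)
    obtain ⟨N, hN⟩ := Filter.eventually_atTop.1 hev
    refine ⟨N, fun k hk => ?_⟩
    by_contra hcon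
    push_neg at hcon
    have hxkK : x k ∈ K := by
      constructor
      · exact Metric.mem_closedBall.2 (hdist k)
      · simp only [Set.mem_compl_iff, Metric.mem_ball, not_lt]
        exact hcon
    exact absurd (hy0min hxkK) (not_le.2 (hN k hk))
  · refine ⟨0, fun k _ => ?_⟩
    by_contra hcon
    push_neg at hcon
    exact hKne ⟨x k, Metric.mem_closedBall.2 (hdist k),
      by simp only [Set.mem_compl_iff, Metric.mem_ball, not_lt]; exact hcon⟩
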